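/- arXiv:2503.18041 — 3 statements merged into one kernel-verified Lean document; each statement's English description precedes it below -/
import Mathlib

section
/- Let γ ∈ (0,1), K > 0 and M > 0, and set A(t) = K·t^{−γ} for t > 0. Let f : [0,∞) → ℝ be continuous and suppose that for every t > 0 one has f(t) ≤ A(t) + M·∫₀ᵗ A(t−s)·f(s) ds. Then there exist T > 0 and C_T > 0, depending only on γ, K and M (and in particular not on f), such that f(t) ≤ C_T·A(t) for all t ∈ (0, T). -/
open MeasureTheory

/-- Singular-kernel Gronwall lemma (Lemma 2.6): if `f` is continuous on `[0,∞)` and satisfies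
`f t ≤ A t + M ∫₀ᵗ A (t-s) f s ds` with `A t = K t^(-γ)`, `γ ∈ (0,1)`, then `f t ≤ C_T A t`
on `(0, T)` for some `T, C_T > 0` depending only on `γ, K, M` (not on `f`). -/
theorem singular_gronwall (γ K M : ℝ) (hγ : γ ∈ Set.Ioo (0 : ℝ) 1) (hK : 0 < K) (hM : 0 < M) :
    ∃ T > (0 : ℝ), ∃ C > (0 : ℝ), ∀ f : ℝ → ℝ,
      ContinuousOn f (Set.Ici (0 : ℝ)) →
      (∀ t > (0 : ℝ), f t ≤ K * t ^ (-γ) + M * ∫ s in (0 : ℝ)..t, K * (t - s) ^ (-γ) * f s) →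
      ∀ t ∈ Set.Ioo (0 : ℝ) T, f t ≤ C * (K * t ^ (-γ)) := by
  obtain ⟨hγ0, hγ1⟩ := hγ
  set c : ℝ := 2 * 2 ^ γ * M * K / (1 - γ) with hc_def
  have h2γ : (0:ℝ) < 2 ^ γ := Real.rpow_pos_of_pos (by norm_num) _
  have hc : 0 < c := by
    apply div_pos (by positivity) (by linarith)
  set T : ℝ := min 1 ((2 * c)⁻¹ ^ ((1 - γ)⁻¹)) with hT_def
  have hT0 : 0 < T := lt_min one_pos (Real.rpow_pos_of_pos (by positivity) _)
  have hT1 : T ≤ 1 := min_le_left _ _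
  have hTc : c * T ^ (1 - γ) ≤ 1 / 2 := by
    have h1 : T ^ (1 - γ) ≤ ((2 * c)⁻¹ ^ ((1 - γ)⁻¹)) ^ (1 - γ) :=
      Real.rpow_le_rpow hT0.le (min_le_right _ _) (by linarith)
    have h2 : ((2 * c)⁻¹ ^ ((1 - γ)⁻¹)) ^ (1 - γ) = (2 * c)⁻¹ := by
      rw [← Real.rpow_mul (by positivity), inv_mul_cancel₀ (by linarith : (1:ℝ) - γ ≠ 0),
        Real.rpow_one]
    calc c * T ^ (1 - γ) ≤ c * (2 * c)⁻¹ :=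
          mul_le_mul_of_nonneg_left (h1.trans_eq h2) hc.le
      _ = 1 / 2 := by field_simp
  refine ⟨T, hT0, 2, by norm_num, ?_⟩
  intro f hf hineq
  -- sup of s^γ f s on (0,T)
  set S : ℝ := sSup ((fun s => s ^ γ * f s) '' Set.Ioo 0 T) with hS_def
  set P : ℝ := max S 0 with hP_def
  have hP0 : 0 ≤ P := le_max_right _ _
  have hne : ((fun s => s ^ γ * f s) '' Set.Ioo 0 T).Nonempty :=
    (Set.nonempty_Ioo.mpr hT0).image _
  have hbdd : BddAbove ((fun s => s ^ γ * f s) '' Set.Ioo 0 T) := by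
    obtain ⟨B, hB⟩ := isCompact_Icc.bddAbove_image
      (hf.mono (fun x hx => hx.1 : Set.Icc (0:ℝ) T ⊆ Set.Ici 0))
    refine ⟨max B 0, ?_⟩
    rintro _ ⟨s, hs, rfl⟩
    have h1 : f s ≤ B := hB ⟨s, ⟨hs.1.le, hs.2.le⟩, rfl⟩
    have h2 : s ^ γ ≤ 1 := Real.rpow_le_one hs.1.le (hs.2.le.trans hT1) hγ0.le
    calc s ^ γ * f s ≤ s ^ γ * max B 0 :=
          mul_le_mul_of_nonneg_left (h1.trans (le_max_left _ _)) (Real.rpow_nonneg hs.1.le _)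
      _ ≤ max B 0 := mul_le_of_le_one_left (le_max_right B 0) h2
  -- the key pointwise estimate
  have key : ∀ t ∈ Set.Ioo (0:ℝ) T, t ^ γ * f t ≤ K + (1/2) * P := by
    intro t ht
    obtain ⟨ht0, htT⟩ := ht
    have hker : IntervalIntegrable (fun s => (t - s) ^ (-γ)) volume 0 t := by
      have h := (intervalIntegral.intervalIntegrable_rpow' (a := 0) (b := t)
        (by linarith : (-1:ℝ) < -γ)).comp_sub_left t
      simpa using h.symm
    have hintpow : IntervalIntegrable (fun s : ℝ => s ^ (-γ)) volume 0 t :=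
      intervalIntegral.intervalIntegrable_rpow' (by linarith)
    have hfc : ContinuousOn f (Set.uIcc 0 t) := hf.mono (by
      rw [Set.uIcc_of_le ht0.le]; exact fun x hx => hx.1)
    have hint1 : IntervalIntegrable (fun s => K * (t - s) ^ (-γ) * f s) volume 0 t :=
      (hker.const_mul K).mul_continuousOn hfc
    have hg : IntervalIntegrable
        (fun s => K * P * ((t/2) ^ (-γ) * (s ^ (-γ) + (t - s) ^ (-γ)))) volume 0 t :=
      ((hintpow.add hker).const_mul _).const_mul _
    have hmono : (∫ s in (0:ℝ)..t, K * (t - s) ^ (-γ) * f s) ≤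
        ∫ s in (0:ℝ)..t, K * P * ((t/2) ^ (-γ) * (s ^ (-γ) + (t - s) ^ (-γ))) := by
      rw [intervalIntegral.integral_of_le ht0.le, intervalIntegral.integral_of_le ht0.le]
      refine setIntegral_mono_on hint1.1 hg.1 measurableSet_Ioc ?_
      intro s hs
      obtain ⟨hs0, hst⟩ := hs
      have hts0 : (0:ℝ) ≤ t - s := by linarith
      have hfsP : f s ≤ s ^ (-γ) * P := by
        have h1 : s ^ γ * f s ≤ S := le_csSup hbdd ⟨s, ⟨hs0, lt_of_le_of_lt hst htT⟩, rfl⟩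
        have h2 : s ^ (-γ) * (s ^ γ * f s) = f s := by
          rw [← mul_assoc, ← Real.rpow_add hs0]; simp
        calc f s = s ^ (-γ) * (s ^ γ * f s) := h2.symm
          _ ≤ s ^ (-γ) * P := mul_le_mul_of_nonneg_left (h1.trans (le_max_left _ _))
              (Real.rpow_nonneg hs0.le _)
      have hkerbd : (t - s) ^ (-γ) * s ^ (-γ) ≤ (t/2) ^ (-γ) * (s ^ (-γ) + (t - s) ^ (-γ)) := by
        have hhalf : (0:ℝ) < t/2 := by linarith
        rcases le_total s (t/2) with h | h
        · have h1 : (t - s) ^ (-γ) ≤ (t/2) ^ (-γ) :=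
            Real.rpow_le_rpow_of_nonpos hhalf (by linarith) (by linarith)
          calc (t - s) ^ (-γ) * s ^ (-γ) ≤ (t/2) ^ (-γ) * s ^ (-γ) :=
                mul_le_mul_of_nonneg_right h1 (Real.rpow_nonneg hs0.le _)
            _ ≤ (t/2) ^ (-γ) * (s ^ (-γ) + (t - s) ^ (-γ)) := by
                have := Real.rpow_nonneg hts0 (-γ)
                nlinarith [Real.rpow_nonneg hhalf.le (-γ)]
        · have h1 : s ^ (-γ) ≤ (t/2) ^ (-γ) :=
            Real.rpow_le_rpow_of_nonpos hhalf h (by linarith)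
          calc (t - s) ^ (-γ) * s ^ (-γ) ≤ (t - s) ^ (-γ) * (t/2) ^ (-γ) :=
                mul_le_mul_of_nonneg_left h1 (Real.rpow_nonneg hts0 _)
            _ ≤ (t/2) ^ (-γ) * (s ^ (-γ) + (t - s) ^ (-γ)) := by
                have := Real.rpow_nonneg hs0.le (-γ)
                nlinarith [Real.rpow_nonneg hhalf.le (-γ)]
      calc K * (t - s) ^ (-γ) * f s ≤ K * (t - s) ^ (-γ) * (s ^ (-γ) * P) :=
            mul_le_mul_of_nonneg_left hfsP (mul_nonneg hK.le (Real.rpow_nonneg hts0 _))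
        _ = K * P * ((t - s) ^ (-γ) * s ^ (-γ)) := by ring
        _ ≤ K * P * ((t/2) ^ (-γ) * (s ^ (-γ) + (t - s) ^ (-γ))) :=
            mul_le_mul_of_nonneg_left hkerbd (mul_nonneg hK.le hP0)
    have e1 : (∫ s in (0:ℝ)..t, s ^ (-γ)) = t ^ (1 - γ) / (1 - γ) := by
      rw [integral_rpow (Or.inl (by linarith))]
      rw [Real.zero_rpow (by intro h; linarith : -γ + 1 ≠ 0)]
      rw [show -γ + 1 = 1 - γ by ring, sub_zero]
    have e2 : (∫ s in (0:ℝ)..t, (t - s) ^ (-γ)) = t ^ (1 - γ) / (1 - γ) := by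
      rw [intervalIntegral.integral_comp_sub_left (fun x => x ^ (-γ)) t, sub_self, sub_zero]
      exact e1
    have hval : (∫ s in (0:ℝ)..t, K * P * ((t/2) ^ (-γ) * (s ^ (-γ) + (t - s) ^ (-γ)))) =
        K * P * ((t/2) ^ (-γ) * (2 * (t ^ (1 - γ) / (1 - γ)))) := by
      rw [intervalIntegral.integral_const_mul, intervalIntegral.integral_const_mul,
        intervalIntegral.integral_add hintpow hker, e1, e2]
      ring
    have hI : (∫ s in (0:ℝ)..t, K * (t - s) ^ (-γ) * f s) ≤
        K * P * ((t/2) ^ (-γ) * (2 * (t ^ (1 - γ) / (1 - γ)))) := hmono.trans_eq hval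
    have hft : f t ≤ K * t ^ (-γ) + M * (K * P * ((t/2) ^ (-γ) * (2 * (t ^ (1 - γ) / (1 - γ))))) :=
      (hineq t ht0).trans (add_le_add le_rfl (mul_le_mul_of_nonneg_left hI hM.le))
    -- multiply by t^γ
    have h1 : t ^ γ * t ^ (-γ) = 1 := by rw [← Real.rpow_add ht0]; simp
    have hhalf : (t/2) ^ (-γ) = 2 ^ γ * t ^ (-γ) := by
      rw [div_eq_mul_inv, Real.mul_rpow ht0.le (by norm_num),
        Real.inv_rpow (by norm_num), ← Real.rpow_neg (by norm_num), neg_neg]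
      ring
    have ht1γ : t ^ (1 - γ) = t * t ^ (-γ) := by
      rw [show (1:ℝ) - γ = 1 + (-γ) by ring, Real.rpow_add ht0, Real.rpow_one]
    have h2 : t ^ γ * (K * t ^ (-γ) + M * (K * P * ((t/2) ^ (-γ) * (2 * (t ^ (1 - γ) / (1 - γ))))))
        = K + c * t ^ (1 - γ) * P := by
      rw [hhalf, ht1γ]
      have hexp : t ^ γ * (K * t ^ (-γ) +
          M * (K * P * ((2 ^ γ * t ^ (-γ)) * (2 * (t * t ^ (-γ) / (1 - γ)))))) =
          (t ^ γ * t ^ (-γ)) * K +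
            (2 * 2 ^ γ * M * K / (1 - γ)) * ((t * t ^ (-γ)) * P * (t ^ γ * t ^ (-γ))) := by
        ring
      rw [hexp, h1, hc_def]; ring
    have h3 : t ^ γ * f t ≤ K + c * t ^ (1 - γ) * P := by
      calc t ^ γ * f t ≤ t ^ γ * (K * t ^ (-γ) +
            M * (K * P * ((t/2) ^ (-γ) * (2 * (t ^ (1 - γ) / (1 - γ)))))) :=
          mul_le_mul_of_nonneg_left hft (Real.rpow_nonneg ht0.le _)
        _ = K + c * t ^ (1 - γ) * P := h2
    have h4 : c * t ^ (1 - γ) ≤ 1 / 2 := by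
      calc c * t ^ (1 - γ) ≤ c * T ^ (1 - γ) :=
            mul_le_mul_of_nonneg_left (Real.rpow_le_rpow ht0.le htT.le (by linarith)) hc.le
        _ ≤ 1 / 2 := hTc
    calc t ^ γ * f t ≤ K + c * t ^ (1 - γ) * P := h3
      _ ≤ K + (1/2) * P := by nlinarith
  -- absorb
  have hS : S ≤ K + (1/2) * P := by
    refine csSup_le hne ?_
    rintro _ ⟨t, ht, rfl⟩
    exact key t ht
  have hP2K : P ≤ 2 * K := by
    have : P ≤ K + (1/2) * P := max_le hS (by positivity)
    linarith
  intro t ht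
  have h1 : t ^ γ * f t ≤ S := le_csSup hbdd ⟨t, ht, rfl⟩
  have h2 : t ^ (-γ) * (t ^ γ * f t) = f t := by
    rw [← mul_assoc, ← Real.rpow_add ht.1]; simp
  calc f t = t ^ (-γ) * (t ^ γ * f t) := h2.symm
    _ ≤ t ^ (-γ) * (2 * K) := mul_le_mul_of_nonneg_left
        (h1.trans ((le_max_left S 0).trans hP2K)) (Real.rpow_nonneg ht.1.le _)
    _ = 2 * (K * t ^ (-γ)) := by ring
end

section
/- Let X be a nonzero complex Banach space, T : X → X a continuous linear operator, and z₀ ∈ σ(T) an isolated point of the spectrum, i.e. there is ε₀ > 0 such that σ(T) ∩ {z ∈ ℂ : |z − z₀| ≤ ε₀} = {z₀}. Then for every ε ∈ (0, ε₀] there exists δ > 0 such that every continuous linear operator S : X → X with ‖S − T‖ < δ has a spectral point near z₀: there exists z ∈ σ(S) with |z − z₀| < ε. -/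
open Metric Set

/-- Perturbation of a unit in a complete normed ring with `‖1‖ = 1`. -/
lemma unit_sub_perturb {A : Type*} [NormedRing A] [CompleteSpace A] [NormOneClass A]
    (u : Aˣ) (b : A) (M : ℝ) (hu : ‖((u⁻¹ : Aˣ) : A)‖ ≤ M) (hb : M * ‖b‖ < 1) :
    ∃ v : Aˣ, (v : A) = (u : A) - b ∧ ‖((v⁻¹ : Aˣ) : A)‖ ≤ M / (1 - M * ‖b‖) := by
  have hM0 : 0 ≤ M := le_trans (norm_nonneg _) hu
  have hMb0 : 0 ≤ M * ‖b‖ := mul_nonneg hM0 (norm_nonneg _)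
  set t : A := ((u⁻¹ : Aˣ) : A) * b with ht_def
  have ht : ‖t‖ < 1 := by
    calc ‖t‖ ≤ ‖((u⁻¹ : Aˣ) : A)‖ * ‖b‖ := norm_mul_le _ _
    _ ≤ M * ‖b‖ := by gcongr
    _ < 1 := hb
  have htM : ‖t‖ ≤ M * ‖b‖ := le_trans (norm_mul_le _ _) (by gcongr)
  set w : Aˣ := Units.oneSub t ht with hw
  refine ⟨u * w, ?_, ?_⟩
  · have : (w : A) = 1 - t := rfl
    simp only [Units.val_mul, this, mul_sub, mul_one, ht_def]
    rw [← mul_assoc]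
    simp
  · have hwinv : ‖((w⁻¹ : Aˣ) : A)‖ ≤ (1 - ‖t‖)⁻¹ := by
      have : ((w⁻¹ : Aˣ) : A) = ∑' n : ℕ, t ^ n := rfl
      rw [this]
      have := tsum_geometric_le_of_norm_lt_one t ht
      simpa using this
    have h1 : ((( u * w)⁻¹ : Aˣ) : A) = ((w⁻¹ : Aˣ) : A) * ((u⁻¹ : Aˣ) : A) := by
      simp [mul_comm]
    rw [h1]
    calc ‖((w⁻¹ : Aˣ) : A) * ((u⁻¹ : Aˣ) : A)‖
        ≤ ‖((w⁻¹ : Aˣ) : A)‖ * ‖((u⁻¹ : Aˣ) : A)‖ := norm_mul_le _ _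
      _ ≤ (1 - ‖t‖)⁻¹ * M := mul_le_mul hwinv hu (norm_nonneg _) (inv_nonneg.mpr (by linarith))
      _ ≤ (1 - M * ‖b‖)⁻¹ * M := by
          have hle : (1 - ‖t‖)⁻¹ ≤ (1 - M * ‖b‖)⁻¹ :=
            inv_anti₀ (by linarith) (by linarith)
          exact mul_le_mul_of_nonneg_right hle hM0
      _ = M / (1 - M * ‖b‖) := by ring



/-- Lower semicontinuity of the spectrum at an isolated spectral point (key spectral
perturbation step in Propositions 2.8 and 4.1): if `z₀` is an isolated point of `σ(T)`,
then every operator `S` sufficiently close to `T` in operator norm has a spectral point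
within `ε` of `z₀`. -/
theorem spectrum_lower_semicontinuous_at_isolated_point
    {X : Type*} [NormedAddCommGroup X] [NormedSpace ℂ X] [CompleteSpace X] [Nontrivial X]
    (T : X →L[ℂ] X) (z₀ : ℂ) (hz₀ : z₀ ∈ spectrum ℂ T)
    (ε₀ : ℝ) (hε₀ : 0 < ε₀)
    (hiso : spectrum ℂ T ∩ Metric.closedBall z₀ ε₀ = {z₀}) :
    ∀ ε : ℝ, 0 < ε → ε ≤ ε₀ →
      ∃ δ > (0 : ℝ), ∀ S : X →L[ℂ] X, ‖S - T‖ < δ →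
        ∃ z ∈ spectrum ℂ S, ‖z - z₀‖ < ε := by
  intro ε hε hεε₀
  -- the circle of radius ε around z₀ lies in the resolvent set of T
  have hKρ : ∀ z ∈ sphere z₀ ε, z ∈ resolventSet ℂ T := by
    intro z hz
    by_contra hzρ
    have hzσ : z ∈ spectrum ℂ T := hzρ
    have hzball : z ∈ closedBall z₀ ε₀ := by
      rw [mem_closedBall, mem_sphere.mp hz]
      exact hεε₀
    have : z ∈ ({z₀} : Set ℂ) := hiso ▸ ⟨hzσ, hzball⟩
    rw [mem_singleton_iff] at this
    subst this
    have hd := mem_sphere.mp hz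
    rw [dist_self] at hd
    exact hε.ne' hd.symm
  -- bound on the resolvent of T on the circle
  have hcont : ContinuousOn (resolvent T) (sphere z₀ ε) := fun z hz =>
    ((spectrum.hasDerivAt_resolvent (hKρ z hz)).differentiableAt.continuousAt).continuousWithinAt
  obtain ⟨M₀, hM₀⟩ := (isCompact_sphere z₀ ε).exists_bound_of_continuousOn hcont
  set M : ℝ := max M₀ 1 with hM_def
  have hM1 : (1 : ℝ) ≤ M := le_max_right _ _
  have hM0 : (0 : ℝ) < M := lt_of_lt_of_le one_pos hM1
  refine ⟨(2 * M)⁻¹, by positivity, ?_⟩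
  intro S hS
  by_contra hcon
  push_neg at hcon
  -- under the contradiction hypothesis, the closed ball is in the resolvent set of S,
  -- with resolvent bounded by 2M on the sphere
  have hST : M * ‖S - T‖ < 1 / 2 := by
    rw [lt_div_iff₀ (by norm_num)]
    calc M * ‖S - T‖ * 2 < M * (2 * M)⁻¹ * 2 := by
          have h0 : (0:ℝ) ≤ ‖S - T‖ := norm_nonneg _
          nlinarith
      _ = 1 := by field_simp
  have hsphere : ∀ z ∈ sphere z₀ ε, ∃ v : (X →L[ℂ] X)ˣ,
      (v : X →L[ℂ] X) = algebraMap ℂ (X →L[ℂ] X) z - S ∧ ‖((v⁻¹ : _) : X →L[ℂ] X)‖ ≤ 2 * M := by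
    intro z hz
    have hzρ := hKρ z hz
    have huval : ((hzρ.unit : (X →L[ℂ] X)ˣ) : X →L[ℂ] X) = algebraMap ℂ (X →L[ℂ] X) z - T :=
      hzρ.unit_spec
    have huinv : ‖(((hzρ.unit)⁻¹ : (X →L[ℂ] X)ˣ) : X →L[ℂ] X)‖ ≤ M := by
      have : resolvent T z = (((hzρ.unit)⁻¹ : (X →L[ℂ] X)ˣ) : X →L[ℂ] X) := by
        rw [resolvent, ← Ring.inverse_unit hzρ.unit, huval]
      rw [← this]
      exact le_trans (hM₀ z hz) (le_max_left _ _)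
    obtain ⟨v, hv, hvinv⟩ := unit_sub_perturb hzρ.unit (S - T) M huinv
      (lt_trans hST (by norm_num))
    refine ⟨v, ?_, ?_⟩
    · rw [hv, huval]; abel
    · refine le_trans hvinv ?_
      rw [div_le_iff₀ (by linarith)]
      nlinarith [norm_nonneg (S - T), mul_nonneg hM0.le (norm_nonneg (S-T))]
  have hball : ∀ z ∈ closedBall z₀ ε, z ∈ resolventSet ℂ S := by
    intro z hz
    rcases lt_or_eq_of_le (mem_closedBall.mp hz) with h | h
    · by_contra hzρ
      have hzσ : z ∈ spectrum ℂ S := hzρ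
      have := hcon z hzσ
      rw [← Complex.dist_eq] at this
      exact absurd h (not_lt.mpr this)
    · rw [spectrum.mem_resolventSet_iff]
      obtain ⟨v, hv, _⟩ := hsphere z (mem_sphere.mpr h)
      exact hv ▸ v.isUnit
  -- maximum modulus principle: the resolvent of S is bounded by 2M at z₀
  have hdiff : DiffContOnCl ℂ (resolvent S) (ball z₀ ε) := by
    apply DifferentiableOn.diffContOnCl
    intro z hz
    rw [closure_ball z₀ hε.ne'] at hz
    exact ((spectrum.hasDerivAt_resolvent (hball z hz)).differentiableAt).differentiableWithinAt
  have hz₀ball : z₀ ∈ closure (ball z₀ ε) := by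
    rw [closure_ball z₀ hε.ne']
    exact mem_closedBall_self hε.le
  have hbound : ‖resolvent S z₀‖ ≤ 2 * M := by
    apply Complex.norm_le_of_forall_mem_frontier_norm_le isBounded_ball hdiff _ hz₀ball
    intro z hz
    rw [frontier_ball z₀ hε.ne'] at hz
    obtain ⟨v, hv, hvinv⟩ := hsphere z hz
    rw [resolvent, ← hv, Ring.inverse_unit]
    exact hvinv
  -- conclude z₀ ∈ resolventSet T, contradiction
  have hz₀S : z₀ ∈ resolventSet ℂ S := hball z₀ (mem_closedBall_self hε.le)
  have huinv : ‖(((hz₀S.unit)⁻¹ : (X →L[ℂ] X)ˣ) : X →L[ℂ] X)‖ ≤ 2 * M := by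
    have : resolvent S z₀ = (((hz₀S.unit)⁻¹ : (X →L[ℂ] X)ˣ) : X →L[ℂ] X) := by
      rw [resolvent, ← Ring.inverse_unit hz₀S.unit, hz₀S.unit_spec]
    rw [← this]; exact hbound
  have hTS : 2 * M * ‖T - S‖ < 1 := by
    rw [norm_sub_rev]; nlinarith
  obtain ⟨v, hv, _⟩ := unit_sub_perturb hz₀S.unit (T - S) (2 * M) huinv hTS
  have : IsUnit (algebraMap ℂ (X →L[ℂ] X) z₀ - T) := by
    have : (v : X →L[ℂ] X) = algebraMap ℂ (X →L[ℂ] X) z₀ - T := by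
      rw [hv, hz₀S.unit_spec]; abel
    exact this ▸ v.isUnit
  exact (spectrum.mem_iff.mp hz₀) this
end

section
/- Let d ≥ 1, K ≥ 0 and R > K. Let g ∈ L²(ℝ^d, ℝ) and let u₀ ∈ L¹(ℝ^d, ℝ) vanish almost everywhere outside the closed ball {y : ‖y‖ ≤ K}. Then the convolution g ⋆ u₀ ∈ L²(ℝ^d) satisfies the tail estimate ( ∫_{‖x‖ > R} |(g ⋆ u₀)(x)|² dx )^{1/2} ≤ ( ∫_{‖z‖ > R − K} |g(z)|² dz )^{1/2} · ‖u₀‖_{L¹}. -/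
open MeasureTheory
open scoped ENNReal NNReal

namespace ConvTailAux

lemma conv_aesm {d : ℕ} (g u : EuclideanSpace ℝ (Fin d) → ℝ)
    (hg : AEStronglyMeasurable g volume) (hu : AEStronglyMeasurable u volume) :
    AEStronglyMeasurable (fun x => ∫ y, g (x - y) * u y)
      (volume : Measure (EuclideanSpace ℝ (Fin d))) := by
  have h1 : AEStronglyMeasurable
      (fun p : EuclideanSpace ℝ (Fin d) × EuclideanSpace ℝ (Fin d) => g (p.1 - p.2))
      (volume.prod volume) :=
    hg.comp_quasiMeasurePreserving
      (quasiMeasurePreserving_sub_of_right_invariant volume volume)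
  have h2 : AEStronglyMeasurable
      (fun p : EuclideanSpace ℝ (Fin d) × EuclideanSpace ℝ (Fin d) => u p.2)
      (volume.prod volume) := hu.comp_quasiMeasurePreserving Measure.quasiMeasurePreserving_snd
  exact (h1.mul h2).integral_prod_right'

lemma conv_lintegral_sq_le {d : ℕ} (g u : EuclideanSpace ℝ (Fin d) → ℝ)
    (hg : AEStronglyMeasurable g volume) (hu : Integrable u volume) :
    ∫⁻ x, (‖∫ y, g (x - y) * u y‖₊ : ℝ≥0∞) ^ 2 ≤
      (∫⁻ z, (‖g z‖₊ : ℝ≥0∞) ^ 2) * (∫⁻ y, (‖u y‖₊ : ℝ≥0∞)) ^ 2 := by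
  set G : EuclideanSpace ℝ (Fin d) → ℝ≥0∞ := fun z => (‖g z‖₊ : ℝ≥0∞) with hGdef
  set U : EuclideanSpace ℝ (Fin d) → ℝ≥0∞ := fun y => (‖u y‖₊ : ℝ≥0∞) with hUdef
  set I : ℝ≥0∞ := ∫⁻ y, U y with hIdef
  have hI : I ≠ ∞ := hu.2.ne
  have hGm : AEMeasurable G volume := hg.aemeasurable.nnnorm.coe_nnreal_ennreal
  have hUm : AEMeasurable U volume := hu.aestronglyMeasurable.aemeasurable.nnnorm.coe_nnreal_ennreal
  -- pointwise Cauchy–Schwarz bound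
  have key : ∀ x, (‖∫ y, g (x - y) * u y‖₊ : ℝ≥0∞) ^ 2 ≤
      (∫⁻ y, G (x - y) ^ 2 * U y) * I := by
    intro x
    have hGx : AEMeasurable (fun y => G (x - y)) volume :=
      hGm.comp_quasiMeasurePreserving
        (Measure.measurePreserving_sub_left volume x).quasiMeasurePreserving
    have h0 : (‖∫ y, g (x - y) * u y‖₊ : ℝ≥0∞) ≤ ∫⁻ y, G (x - y) * U y := by
      refine (enorm_integral_le_lintegral_enorm _).trans_eq ?_
      simp [hGdef, hUdef, nnnorm_mul, ENNReal.coe_mul, enorm_mul]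
      rfl
    have hCS : (∫⁻ y, G (x - y) * U y) ≤
        (∫⁻ y, G (x - y) ^ 2 * U y) ^ (1/2 : ℝ) * I ^ (1/2 : ℝ) := by
      have := ENNReal.lintegral_mul_le_Lp_mul_Lq volume
        (p := 2) (q := 2) Real.HolderConjugate.two_two
        (f := fun y => G (x - y) * U y ^ (1/2 : ℝ))
        (g := fun y => U y ^ (1/2 : ℝ))
        (hGx.mul (hUm.pow aemeasurable_const)) (hUm.pow aemeasurable_const)
      calc (∫⁻ y, G (x - y) * U y)
          = ∫⁻ y, ((fun y => G (x - y) * U y ^ (1/2:ℝ)) * fun y => U y ^ (1/2:ℝ)) y := by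
            congr 1; funext y
            simp only [Pi.mul_apply]
            rw [mul_assoc, ← ENNReal.rpow_add_of_nonneg _ _ (by norm_num) (by norm_num)]
            norm_num
        _ ≤ (∫⁻ y, (G (x - y) * U y ^ (1/2:ℝ)) ^ (2:ℝ)) ^ (1/2:ℝ) *
            (∫⁻ y, (U y ^ (1/2:ℝ)) ^ (2:ℝ)) ^ (1/2:ℝ) := this
        _ = (∫⁻ y, G (x - y) ^ 2 * U y) ^ (1/2 : ℝ) * I ^ (1/2 : ℝ) := by
            congr 2
            · congr 1; funext y
              rw [ENNReal.mul_rpow_of_nonneg _ _ (by norm_num : (0:ℝ) ≤ 2),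
                ← ENNReal.rpow_mul, ← ENNReal.rpow_natCast (G (x-y)) 2]
              norm_num
            · rw [hIdef]; congr 1; funext y
              rw [← ENNReal.rpow_mul]; norm_num
    calc (‖∫ y, g (x - y) * u y‖₊ : ℝ≥0∞) ^ 2 ≤ (∫⁻ y, G (x - y) * U y) ^ 2 := by
          exact pow_le_pow_left' h0 2
      _ ≤ ((∫⁻ y, G (x - y) ^ 2 * U y) ^ (1/2 : ℝ) * I ^ (1/2 : ℝ)) ^ 2 :=
          pow_le_pow_left' hCS 2
      _ = (∫⁻ y, G (x - y) ^ 2 * U y) * I := by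
          rw [mul_pow, ← ENNReal.rpow_natCast (_ ^ (1/2:ℝ)) 2,
            ← ENNReal.rpow_natCast (I ^ (1/2:ℝ)) 2, ← ENNReal.rpow_mul, ← ENNReal.rpow_mul]
          norm_num
  -- integrate in x, swap, translate
  have hGprod : AEMeasurable
      (fun p : EuclideanSpace ℝ (Fin d) × EuclideanSpace ℝ (Fin d) => G (p.1 - p.2))
      (volume.prod volume) :=
    hGm.comp_quasiMeasurePreserving
      (quasiMeasurePreserving_sub_of_right_invariant volume volume)
  have hUprod : AEMeasurable
      (fun p : EuclideanSpace ℝ (Fin d) × EuclideanSpace ℝ (Fin d) => U p.2)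
      (volume.prod volume) :=
    hUm.comp_quasiMeasurePreserving Measure.quasiMeasurePreserving_snd
  have hswap : (∫⁻ x, ∫⁻ y, G (x - y) ^ 2 * U y) = (∫⁻ z, G z ^ 2) * I := by
    rw [lintegral_lintegral_swap ((hGprod.pow_const 2).mul hUprod)]
    have : ∀ y, (∫⁻ x, G (x - y) ^ 2 * U y) = (∫⁻ z, G z ^ 2) * U y := by
      intro y
      have hmeas : AEMeasurable (fun x => G (x - y) ^ 2) volume := by
        exact (hGm.comp_quasiMeasurePreserving
          (measurePreserving_sub_right volume y).quasiMeasurePreserving).pow_const 2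
      rw [lintegral_mul_const'' _ hmeas]
      congr 1
      exact lintegral_sub_right_eq_self (fun z => G z ^ 2) y
    simp_rw [this]
    rw [lintegral_const_mul'' _ hUm, hIdef]
  calc (∫⁻ x, (‖∫ y, g (x - y) * u y‖₊ : ℝ≥0∞) ^ 2)
      ≤ ∫⁻ x, (∫⁻ y, G (x - y) ^ 2 * U y) * I := lintegral_mono key
    _ = (∫⁻ x, ∫⁻ y, G (x - y) ^ 2 * U y) * I := lintegral_mul_const' I _ hI
    _ = (∫⁻ z, G z ^ 2) * I * I := by rw [hswap]
    _ = (∫⁻ z, G z ^ 2) * I ^ 2 := by ring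

lemma sq_integral_eq {α : Type*} [MeasurableSpace α] {μ : Measure α} (f : α → ℝ)
    (hf : AEStronglyMeasurable f μ) :
    ∫ x, f x ^ 2 ∂μ = (∫⁻ x, (‖f x‖₊ : ℝ≥0∞) ^ 2 ∂μ).toReal := by
  have hsm : AEStronglyMeasurable (fun x => f x ^ 2) μ := by
    exact hf.pow 2
  rw [integral_eq_lintegral_of_nonneg_ae (Filter.Eventually.of_forall fun x => sq_nonneg _) hsm]
  congr 1
  refine lintegral_congr fun x => ?_
  rw [← sq_abs, ENNReal.ofReal_pow (abs_nonneg _)]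
  exact congrArg (· ^ 2) (Real.enorm_eq_ofReal_abs (f x)).symm

lemma abs_integral_eq {α : Type*} [MeasurableSpace α] {μ : Measure α} (f : α → ℝ)
    (hf : AEStronglyMeasurable f μ) :
    ∫ x, |f x| ∂μ = (∫⁻ x, (‖f x‖₊ : ℝ≥0∞) ∂μ).toReal := by
  have hsm : AEStronglyMeasurable (fun x => |f x|) μ := by
    simpa [Real.norm_eq_abs] using hf.norm
  rw [integral_eq_lintegral_of_nonneg_ae (Filter.Eventually.of_forall fun x => abs_nonneg _) hsm]
  congr 1
  refine lintegral_congr fun x => ?_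
  exact (Real.enorm_eq_ofReal_abs (f x)).symm

lemma rpow_toReal_two (x : ℝ≥0∞) : x ^ (2 : ℝ≥0∞).toReal = x ^ 2 := by
  rw [show ((2 : ℝ≥0∞).toReal) = ((2 : ℕ) : ℝ) by norm_num, ENNReal.rpow_natCast]

lemma conv_memL2 {d : ℕ} (g u : EuclideanSpace ℝ (Fin d) → ℝ)
    (hgsm : AEStronglyMeasurable g volume)
    (hgfin : (∫⁻ z, (‖g z‖₊ : ℝ≥0∞) ^ 2) < ∞) (hu : Integrable u volume) :
    MemLp (fun x => ∫ y, g (x - y) * u y) 2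
      (volume : Measure (EuclideanSpace ℝ (Fin d))) := by
  refine ⟨conv_aesm g u hgsm hu.1, ?_⟩
  rw [eLpNorm_lt_top_iff_lintegral_rpow_enorm_lt_top two_ne_zero (by norm_num)]
  simp_rw [rpow_toReal_two]
  refine lt_of_le_of_lt (conv_lintegral_sq_le g u hgsm hu) ?_
  exact ENNReal.mul_lt_top hgfin (ENNReal.pow_lt_top hu.2)

end ConvTailAux

open ConvTailAux

/-- Localized Young-type tail estimate for the convolution (used in the proof of
Proposition 2.5): if `g ∈ L²(ℝ^d)` and `u₀ ∈ L¹(ℝ^d)` is supported (a.e.) in the closed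
ball of radius `K`, then for `R > K`,
`‖g ⋆ u₀‖_{L²({‖x‖ > R})} ≤ ‖g‖_{L²({‖z‖ > R−K})} · ‖u₀‖_{L¹}`;
moreover `g ⋆ u₀ ∈ L²(ℝ^d)`. -/
theorem convolution_tail_estimate
    (d : ℕ) (hd : 1 ≤ d) (K R : ℝ) (hK : 0 ≤ K) (hR : K < R)
    (g u₀ : EuclideanSpace ℝ (Fin d) → ℝ)
    (hg : MemLp g 2 (volume : Measure (EuclideanSpace ℝ (Fin d))))
    (hu₀ : Integrable u₀ (volume : Measure (EuclideanSpace ℝ (Fin d))))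
    (hsupp : ∀ᵐ y ∂(volume : Measure (EuclideanSpace ℝ (Fin d))),
      y ∉ Metric.closedBall (0 : EuclideanSpace ℝ (Fin d)) K → u₀ y = 0) :
    MemLp (fun x => ∫ y, g (x - y) * u₀ y) 2
        (volume : Measure (EuclideanSpace ℝ (Fin d))) ∧
    Real.sqrt (∫ x in {x : EuclideanSpace ℝ (Fin d) | R < ‖x‖},
        (∫ y, g (x - y) * u₀ y) ^ 2) ≤
      Real.sqrt (∫ z in {z : EuclideanSpace ℝ (Fin d) | R - K < ‖z‖}, (g z) ^ 2) *
        ∫ y, |u₀ y| := by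
  classical
  have hS : MeasurableSet {x : EuclideanSpace ℝ (Fin d) | R < ‖x‖} :=
    (isOpen_lt continuous_const continuous_norm).measurableSet
  have hS' : MeasurableSet {z : EuclideanSpace ℝ (Fin d) | R - K < ‖z‖} :=
    (isOpen_lt continuous_const continuous_norm).measurableSet
  set g' : EuclideanSpace ℝ (Fin d) → ℝ :=
    Set.indicator {z : EuclideanSpace ℝ (Fin d) | R - K < ‖z‖} g with hg'def
  have hg'sm : AEStronglyMeasurable g' volume := hg.1.indicator hS'
  have hC : (∫⁻ y, (‖u₀ y‖₊ : ℝ≥0∞)) ≠ ∞ := hu₀.2.ne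
  have hgfin : (∫⁻ z, (‖g z‖₊ : ℝ≥0∞) ^ 2) < ∞ := by
    have h := lintegral_rpow_enorm_lt_top_of_eLpNorm_lt_top
      (p := 2) two_ne_zero (by norm_num) hg.2
    simp only [rpow_toReal_two] at h
    exact h
  have hg'le : ∀ z, (‖g' z‖₊ : ℝ≥0∞) ^ 2 ≤ (‖g z‖₊ : ℝ≥0∞) ^ 2 := by
    intro z
    by_cases hz : z ∈ {z : EuclideanSpace ℝ (Fin d) | R - K < ‖z‖}
    · rw [hg'def, Set.indicator_of_mem hz]
    · rw [hg'def, Set.indicator_of_notMem hz]; simp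
  have hg'fin : (∫⁻ z, (‖g' z‖₊ : ℝ≥0∞) ^ 2) < ∞ :=
    lt_of_le_of_lt (lintegral_mono hg'le) hgfin
  refine ⟨conv_memL2 g u₀ hg.1 hgfin hu₀, ?_⟩
  -- tail estimate
  have hmem' : MemLp (fun x => ∫ y, g' (x - y) * u₀ y) 2
      (volume : Measure (EuclideanSpace ℝ (Fin d))) := conv_memL2 g' u₀ hg'sm hg'fin hu₀
  have hFF' : Set.EqOn (fun x => (∫ y, g (x - y) * u₀ y) ^ 2)
      (fun x => (∫ y, g' (x - y) * u₀ y) ^ 2) {x : EuclideanSpace ℝ (Fin d) | R < ‖x‖} := by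
    intro x hx
    simp only [Set.mem_setOf_eq] at hx
    have : (∫ y, g (x - y) * u₀ y) = ∫ y, g' (x - y) * u₀ y := by
      refine integral_congr_ae ?_
      filter_upwards [hsupp] with y hy
      by_cases hyK : y ∈ Metric.closedBall (0 : EuclideanSpace ℝ (Fin d)) K
      · have hyn : ‖y‖ ≤ K := by simpa using hyK
        have hmem : x - y ∈ {z : EuclideanSpace ℝ (Fin d) | R - K < ‖z‖} := by
          have h1 : ‖x‖ - ‖y‖ ≤ ‖x - y‖ := norm_sub_norm_le x y
          simp only [Set.mem_setOf_eq]; linarith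
        rw [hg'def, Set.indicator_of_mem hmem]
      · rw [hy hyK, mul_zero, mul_zero]
    simp only [this]
  have hBr : (∫ z in {z : EuclideanSpace ℝ (Fin d) | R - K < ‖z‖}, (g z) ^ 2) =
      (∫⁻ z, (‖g' z‖₊ : ℝ≥0∞) ^ 2).toReal := by
    have h1 : (∫ z in {z : EuclideanSpace ℝ (Fin d) | R - K < ‖z‖}, (g z) ^ 2) =
        ∫ z in {z : EuclideanSpace ℝ (Fin d) | R - K < ‖z‖}, (g' z) ^ 2 :=
      setIntegral_congr_fun hS' (fun z hz => by rw [hg'def, Set.indicator_of_mem hz])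
    have h2 : (∫⁻ z, (‖g' z‖₊ : ℝ≥0∞) ^ 2) =
        ∫⁻ z in {z : EuclideanSpace ℝ (Fin d) | R - K < ‖z‖}, (‖g' z‖₊ : ℝ≥0∞) ^ 2 := by
      rw [← lintegral_indicator hS']
      refine lintegral_congr fun z => ?_
      by_cases hz : z ∈ {z : EuclideanSpace ℝ (Fin d) | R - K < ‖z‖}
      · rw [Set.indicator_of_mem hz]
      · rw [Set.indicator_of_notMem hz, hg'def, Set.indicator_of_notMem hz]; simp
    rw [h1, h2, ← sq_integral_eq _ hg'sm.restrict]
  have hCr : (∫ y, |u₀ y|) = (∫⁻ y, (‖u₀ y‖₊ : ℝ≥0∞)).toReal :=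
    abs_integral_eq _ hu₀.1
  have hA : (∫ x in {x : EuclideanSpace ℝ (Fin d) | R < ‖x‖},
      (∫ y, g (x - y) * u₀ y) ^ 2) ≤
      (∫⁻ z, (‖g' z‖₊ : ℝ≥0∞) ^ 2).toReal * ((∫⁻ y, (‖u₀ y‖₊ : ℝ≥0∞)).toReal) ^ 2 := by
    calc (∫ x in {x : EuclideanSpace ℝ (Fin d) | R < ‖x‖}, (∫ y, g (x - y) * u₀ y) ^ 2)
        = ∫ x in {x : EuclideanSpace ℝ (Fin d) | R < ‖x‖},
            (∫ y, g' (x - y) * u₀ y) ^ 2 := setIntegral_congr_fun hS hFF'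
      _ ≤ ∫ x, (∫ y, g' (x - y) * u₀ y) ^ 2 :=
          setIntegral_le_integral hmem'.integrable_sq
            (Filter.Eventually.of_forall fun x => sq_nonneg _)
      _ = (∫⁻ x, (‖∫ y, g' (x - y) * u₀ y‖₊ : ℝ≥0∞) ^ 2).toReal :=
          sq_integral_eq _ hmem'.1
      _ ≤ ((∫⁻ z, (‖g' z‖₊ : ℝ≥0∞) ^ 2) * (∫⁻ y, (‖u₀ y‖₊ : ℝ≥0∞)) ^ 2).toReal := by
          refine ENNReal.toReal_mono ?_ (conv_lintegral_sq_le g' u₀ hg'sm hu₀)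
          exact ENNReal.mul_ne_top hg'fin.ne (ENNReal.pow_ne_top hC)
      _ = (∫⁻ z, (‖g' z‖₊ : ℝ≥0∞) ^ 2).toReal *
            ((∫⁻ y, (‖u₀ y‖₊ : ℝ≥0∞)).toReal) ^ 2 := by
          rw [ENNReal.toReal_mul, ENNReal.toReal_pow]
  rw [hBr, hCr]
  calc Real.sqrt (∫ x in {x : EuclideanSpace ℝ (Fin d) | R < ‖x‖},
        (∫ y, g (x - y) * u₀ y) ^ 2)
      ≤ Real.sqrt ((∫⁻ z, (‖g' z‖₊ : ℝ≥0∞) ^ 2).toReal *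
          ((∫⁻ y, (‖u₀ y‖₊ : ℝ≥0∞)).toReal) ^ 2) := Real.sqrt_le_sqrt hA
    _ = Real.sqrt ((∫⁻ z, (‖g' z‖₊ : ℝ≥0∞) ^ 2).toReal) *
          (∫⁻ y, (‖u₀ y‖₊ : ℝ≥0∞)).toReal := by
        rw [Real.sqrt_mul ENNReal.toReal_nonneg, Real.sqrt_sq ENNReal.toReal_nonneg]
end
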